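/- Let G be a graph on vertex set V partitioned into nonempty sets V_1, …, V_k, each of size at least 2, with no edge inside any V_i. Construct G' from G by: (a) adding all edges inside each V_i (making each V_i a clique), (b) adding a new vertex u adjacent to all of V, and (c) adding a set L of |V| − k + k + 1 new vertices all adjacent to u. Then G has an independent set containing exactly one vertex from each V_i if and only if G' has a set S ⊆ V(G') with |S| ≤ |V| − k and |N_{G'}(S)| ≤ k + 1 such that G' − S is acyclic. -/

import Mathlib

open SimpleGraph

/-- Open neighborhood of a vertex set. -/
def openNbhd {V : Type*} (G : SimpleGraph V) (S : Set V) : Set V :=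
  {v | v ∉ S ∧ ∃ u ∈ S, G.Adj u v}

/-- A set of pairwise non-adjacent vertices. -/
def IsIndepSet {V : Type*} (G : SimpleGraph V) (S : Set V) : Prop :=
  ∀ a ∈ S, ∀ b ∈ S, ¬ G.Adj a b

/-- The graph `G'` of the reduction: the parts `P i` are turned into cliques, a new
vertex `u` (encoded `Sum.inr none`) is joined to all original vertices, and the
vertices of `L` (encoded `Sum.inr (some j)`) are joined to `u`. -/
def reductionGraph {V : Type*} (G : SimpleGraph V) {k m : ℕ} (P : Fin k → Set V) :
    SimpleGraph (V ⊕ Option (Fin m)) :=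
  SimpleGraph.fromRel (fun a b =>
    match a, b with
    | Sum.inl a, Sum.inl b => G.Adj a b ∨ ∃ i, a ∈ P i ∧ b ∈ P i ∧ a ≠ b
    | Sum.inl _, Sum.inr none => True
    | Sum.inr none, Sum.inr (some _) => True
    | _, _ => False)

/-- If every edge is incident to `u`, the graph is acyclic. -/
lemma star_isAcyclic {V : Type*} (G : SimpleGraph V) (u : V)
    (h : ∀ a b, G.Adj a b → a = u ∨ b = u) : G.IsAcyclic := by
  classical
  intro v c hc
  have hu : u ∈ c.support := by
    cases c with
    | nil => exact absurd hc (by simp [Walk.isCycle_def])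
    | cons hadj p =>
      rcases h _ _ hadj with rfl | rfl
      · exact Walk.start_mem_support _
      · exact List.mem_cons_of_mem _ (Walk.start_mem_support _)
  have hc' := hc.rotate hu
  set c' := c.rotate u hu with hcdef
  clear_value c'
  clear hcdef hc hu c
  cases c' with
  | nil => exact absurd hc' (by simp [Walk.isCycle_def])
  | cons hadj p =>
    cases p with
    | nil => exact hadj.ne rfl
    | @cons a b _ hadj2 q =>
      have hb : b = u := by
        rcases h _ _ hadj2 with rfl | rfl
        · exact absurd rfl hadj.ne
        · rfl
      subst hb
      cases q with
      | nil => exact hc'.three_le_length.not_gt (by simp)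
      | cons hadj3 r =>
        have := hc'.2
        simp [Walk.support_cons] at this

/-- Triangles preclude acyclicity. -/
lemma triangle_not_acyclic {V : Type*} {G : SimpleGraph V} {a b c : V}
    (hab : G.Adj a b) (hbc : G.Adj b c) (hca : G.Adj c a) : ¬ G.IsAcyclic := by
  intro h
  exact h (Walk.cons hab (Walk.cons hbc (Walk.cons hca Walk.nil)))
    (by
      constructor
      · constructor
        · simp [Walk.isTrail_def, Sym2.eq, Sym2.rel_iff', hab.ne, hbc.ne, hca.ne,
            hab.ne', hbc.ne', hca.ne']
        · simp
      · simp [hbc.ne, hca.ne', hab.ne']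
        aesop)

section
variable {V : Type*} {G : SimpleGraph V} {k m : ℕ} {P : Fin k → Set V}

lemma rg_adj_inl_inl {a b : V} :
    (reductionGraph (m := m) G P).Adj (Sum.inl a) (Sum.inl b) ↔
      a ≠ b ∧ (G.Adj a b ∨ ∃ i, a ∈ P i ∧ b ∈ P i) := by
  simp only [reductionGraph, fromRel_adj]
  constructor
  · rintro ⟨hne, h | h⟩ <;>
    · refine ⟨by simpa using hne, ?_⟩
      rcases h with h | ⟨i, h1, h2, _⟩
      · first | exact Or.inl h | exact Or.inl h.symm
      · exact Or.inr ⟨i, by tauto⟩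
  · rintro ⟨hne, h | ⟨i, h1, h2⟩⟩
    · exact ⟨by simpa using hne, Or.inl (Or.inl h)⟩
    · exact ⟨by simpa using hne, Or.inl (Or.inr ⟨i, h1, h2, hne⟩)⟩

lemma rg_adj_inl_u {a : V} :
    (reductionGraph (m := m) G P).Adj (Sum.inl a) (Sum.inr none) := by
  simp [reductionGraph, fromRel_adj]

lemma rg_adj_u_some {j : Fin m} :
    (reductionGraph (m := m) G P).Adj (Sum.inr none) (Sum.inr (some j)) := by
  simp [reductionGraph, fromRel_adj]

lemma rg_not_adj_inl_some {a : V} {j : Fin m} :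
    ¬ (reductionGraph (m := m) G P).Adj (Sum.inl a) (Sum.inr (some j)) := by
  simp [reductionGraph, fromRel_adj]

lemma rg_not_adj_some_some {i j : Fin m} :
    ¬ (reductionGraph (m := m) G P).Adj (Sum.inr (some i)) (Sum.inr (some j)) := by
  simp [reductionGraph, fromRel_adj]

end

/-- Cardinality of a disjoint `Finset`-indexed union. -/
lemma my_ncard_biUnion {α ι : Type*} (s : Finset ι) (f : ι → Set α)
    (hfin : ∀ i, (f i).Finite) (hdisj : ∀ i j, i ≠ j → Disjoint (f i) (f j)) :
    (⋃ i ∈ s, f i).ncard = ∑ i ∈ s, (f i).ncard := by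
  classical
  induction s using Finset.induction_on with
  | empty => simp
  | @insert a s ha ih =>
    rw [Finset.sum_insert ha, ← ih]
    have hU : (⋃ i ∈ insert a s, f i) = f a ∪ ⋃ i ∈ (s : Finset ι), f i := by
      simp [Set.biUnion_insert]
    rw [hU]
    refine Set.ncard_union_eq ?_ (hfin a) (Set.Finite.biUnion (Set.finite_mem_finset s)
      (fun i _ => hfin i))
    rw [Set.disjoint_iUnion₂_right]
    intro i hi
    exact hdisj a i (fun h => ha (h ▸ hi))

/-- Cardinality decomposition of a set along a partition. -/
lemma ncard_eq_sum_parts {V : Type*} [Fintype V] {k : ℕ} (P : Fin k → Set V)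
    (hdisj : ∀ i j, i ≠ j → Disjoint (P i) (P j))
    (hcover : (⋃ i, P i) = Set.univ) (I : Set V) :
    I.ncard = ∑ i, (I ∩ P i).ncard := by
  have hI : I = ⋃ i ∈ (Finset.univ : Finset (Fin k)), (I ∩ P i) := by
    ext a
    simp only [Finset.mem_univ, Set.iUnion_true, Set.mem_iUnion, Set.mem_inter_iff,
      exists_and_left]
    refine ⟨fun ha => ⟨ha, ?_⟩, fun h => h.1⟩
    have : a ∈ ⋃ i, P i := hcover ▸ Set.mem_univ a
    simpa using this
  nth_rewrite 1 [hI]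
  exact my_ncard_biUnion _ _ (fun i => Set.toFinite _)
    (fun i j hij => ((hdisj i j hij).mono_left Set.inter_subset_right).mono_right
      Set.inter_subset_right)

theorem small_secluded_fvs_W1_reduction {V : Type*} [Fintype V] (G : SimpleGraph V)
    (k : ℕ) (P : Fin k → Set V)
    (hnonempty : ∀ i, (P i).Nonempty)
    (hsize : ∀ i, 2 ≤ (P i).ncard)
    (hdisj : ∀ i j, i ≠ j → Disjoint (P i) (P j))
    (hcover : (⋃ i, P i) = Set.univ)
    (hnoedge : ∀ i, ∀ a ∈ P i, ∀ b ∈ P i, ¬ G.Adj a b) :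
    (∃ I : Set V, _root_.IsIndepSet G I ∧ ∀ i, (I ∩ P i).ncard = 1) ↔
      (∃ S : Set (V ⊕ Option (Fin (Fintype.card V - k + k + 1))),
        S.ncard ≤ Fintype.card V - k ∧
        (openNbhd (reductionGraph G P) S).ncard ≤ k + 1 ∧
        ((reductionGraph G P).induce Sᶜ).IsAcyclic) := by
  classical
  set n := Fintype.card V with hn
  set m := n - k + k + 1 with hm
  set G' := reductionGraph (m := m) G P with hG'
  -- basic cardinality facts
  have huniv_card : (Set.univ : Set V).ncard = n := by
    simp [Set.ncard_univ, Nat.card_eq_fintype_card, hn]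
  have hkn : 2 * k ≤ n := by
    have h1 : (Set.univ : Set V).ncard = ∑ i, ((Set.univ : Set V) ∩ P i).ncard :=
      ncard_eq_sum_parts P hdisj hcover _
    simp only [Set.univ_inter] at h1
    have h2 : 2 * k ≤ ∑ i, (P i).ncard := by
      calc 2 * k = ∑ _i : Fin k, 2 := by simp [mul_comm]
      _ ≤ ∑ i, (P i).ncard := Finset.sum_le_sum (fun i _ => hsize i)
    omega
  constructor
  · -- forward
    rintro ⟨I, hIindep, hIone⟩
    have hIcard : I.ncard = k := by
      rw [ncard_eq_sum_parts P hdisj hcover I]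
      simp [hIone]
    have hIc : Iᶜ.ncard = n - k := by
      have := Set.ncard_add_ncard_compl I
      rw [Nat.card_eq_fintype_card] at this
      omega
    refine ⟨Sum.inl '' Iᶜ, ?_, ?_, ?_⟩
    · rw [Set.ncard_image_of_injective _ Sum.inl_injective, hIc]
    · -- neighborhood bound
      have hsub : openNbhd G' (Sum.inl '' Iᶜ) ⊆
          Sum.inl '' I ∪ {Sum.inr none} := by
        rintro v ⟨hvS, w, hwS, hadj⟩
        obtain ⟨a, haI, rfl⟩ := hwS
        match v with
        | Sum.inl b =>
          left
          refine ⟨b, ?_, rfl⟩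
          by_contra hb
          exact hvS ⟨b, hb, rfl⟩
        | Sum.inr none => right; rfl
        | Sum.inr (some j) => exact absurd hadj rg_not_adj_inl_some
      calc (openNbhd G' (Sum.inl '' Iᶜ)).ncard
          ≤ (Sum.inl '' I ∪ {Sum.inr none} :
              Set (V ⊕ Option (Fin m))).ncard := Set.ncard_le_ncard hsub (Set.toFinite _)
        _ ≤ (Sum.inl '' I : Set (V ⊕ Option (Fin m))).ncard + 1 := by
            have := Set.ncard_union_le (Sum.inl '' I : Set (V ⊕ Option (Fin m)))
              {Sum.inr none}
            simpa using this
        _ = k + 1 := by rw [Set.ncard_image_of_injective _ Sum.inl_injective, hIcard]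
    · -- acyclicity : star centered at inr none
      have humem : (Sum.inr none : V ⊕ Option (Fin m)) ∈ (Sum.inl '' Iᶜ)ᶜ := by
        simp
      apply star_isAcyclic _ ⟨Sum.inr none, humem⟩
      rintro ⟨a, ha⟩ ⟨b, hb⟩ hadj
      have hadj' : G'.Adj a b := hadj
      rcases a with x | xo
      · rcases b with y | yo
        · exfalso
          have hx : x ∈ I := by
            by_contra h; exact ha ⟨x, h, rfl⟩
          have hy : y ∈ I := by
            by_contra h; exact hb ⟨y, h, rfl⟩
          rw [hG', rg_adj_inl_inl] at hadj'
          rcases hadj'.2 with h | ⟨i, h1, h2⟩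
          · exact hIindep x hx y hy h
          · obtain ⟨c, hc⟩ := Set.ncard_eq_one.mp (hIone i)
            have hxc : x = c := by have := hc ▸ Set.mem_inter hx h1; simpa using this
            have hyc : y = c := by have := hc ▸ Set.mem_inter hy h2; simpa using this
            exact hadj'.1 (hxc.trans hyc.symm)
        · rcases yo with _ | j
          · right; exact Subtype.ext rfl
          · exact absurd hadj' rg_not_adj_inl_some
      · rcases xo with _ | j
        · left; exact Subtype.ext rfl
        · rcases b with y | yo
          · exact absurd hadj'.symm rg_not_adj_inl_some
          · rcases yo with _ | j'
            · right; exact Subtype.ext rfl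
            · exact absurd hadj' rg_not_adj_some_some
  · -- backward
    rintro ⟨S, hScard, hNcard, hAcyc⟩
    rcases Nat.eq_zero_or_pos k with hk0 | hkpos
    · subst hk0
      refine ⟨∅, ?_, ?_⟩
      · intro a ha; exact absurd ha (Set.notMem_empty a)
      · intro i; exact i.elim0
    -- step 1 : Sum.inr none ∉ S
    have huS : (Sum.inr none : V ⊕ Option (Fin m)) ∉ S := by
      intro hu
      set A : Set (V ⊕ Option (Fin m)) :=
        (fun j => Sum.inr (some j)) '' {j : Fin m | Sum.inr (some j) ∉ S} with hA
      set B : Set (V ⊕ Option (Fin m)) :=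
        Sum.inl '' {a : V | Sum.inl a ∉ S} with hB
      have hinj1 : Function.Injective (fun j : Fin m => (Sum.inr (some j) : V ⊕ Option (Fin m))) := by
        intro i j h; simpa using h
      have hsubN : A ∪ B ⊆ openNbhd G' S := by
        rintro v (⟨j, hj, rfl⟩ | ⟨a, ha, rfl⟩)
        · exact ⟨hj, Sum.inr none, hu, rg_adj_u_some⟩
        · exact ⟨ha, Sum.inr none, hu, rg_adj_inl_u.symm⟩
      have hdisjAB : Disjoint A B := by
        rw [Set.disjoint_left]
        rintro v ⟨j, _, rfl⟩ ⟨a, _, h⟩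
        exact Sum.inl_ne_inr h
      have hAcard : k + 1 ≤ A.ncard := by
        rw [hA, Set.ncard_image_of_injective _ hinj1]
        have hcompl := Set.ncard_add_ncard_compl {j : Fin m | Sum.inr (some j) ∈ S}
        rw [Nat.card_eq_fintype_card, Fintype.card_fin] at hcompl
        have hle : ({j : Fin m | Sum.inr (some j) ∈ S}).ncard ≤ S.ncard := by
          rw [← Set.ncard_image_of_injective _ hinj1]
          exact Set.ncard_le_ncard (by rintro v ⟨j, hj, rfl⟩; exact hj) (Set.toFinite _)
        have : {j : Fin m | Sum.inr (some j) ∉ S} =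
            {j : Fin m | Sum.inr (some j) ∈ S}ᶜ := rfl
        rw [this]
        omega
      have hBcard : 1 ≤ B.ncard := by
        rw [hB, Set.ncard_image_of_injective _ Sum.inl_injective]
        have hcompl := Set.ncard_add_ncard_compl {a : V | Sum.inl a ∈ S}
        rw [Nat.card_eq_fintype_card] at hcompl
        have hle : ({a : V | Sum.inl a ∈ S}).ncard ≤ S.ncard := by
          rw [← Set.ncard_image_of_injective _ (Sum.inl_injective :
            Function.Injective (Sum.inl : V → V ⊕ Option (Fin m)))]
          exact Set.ncard_le_ncard (by rintro v ⟨a, ha, rfl⟩; exact ha) (Set.toFinite _)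
        have : {a : V | Sum.inl a ∉ S} = {a : V | Sum.inl a ∈ S}ᶜ := rfl
        rw [this]
        omega
      have : A.ncard + B.ncard ≤ (openNbhd G' S).ncard := by
        rw [← Set.ncard_union_eq hdisjAB (Set.toFinite _) (Set.toFinite _)]
        exact Set.ncard_le_ncard hsubN (Set.toFinite _)
      omega
    -- step 2 : no G'-edges between surviving original vertices
    have hkey : ∀ a b : V, Sum.inl a ∉ S → Sum.inl b ∉ S →
        ¬ G'.Adj (Sum.inl a) (Sum.inl b) := by
      intro a b ha hb hadj
      refine triangle_not_acyclic (G := G'.induce Sᶜ)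
        (a := ⟨Sum.inl a, ha⟩) (b := ⟨Sum.inl b, hb⟩) (c := ⟨Sum.inr none, huS⟩)
        ?_ ?_ ?_ hAcyc
      · exact hadj
      · show G'.Adj (Sum.inl b) (Sum.inr none); exact rg_adj_inl_u
      · show G'.Adj (Sum.inr none) (Sum.inl a); exact rg_adj_inl_u.symm
    set I : Set V := {a : V | Sum.inl a ∉ S} with hI
    have hIone : ∀ i, (I ∩ P i).ncard ≤ 1 := by
      intro i
      rw [Set.ncard_le_one_iff (Set.toFinite _)]
      rintro a b ⟨haI, haP⟩ ⟨hbI, hbP⟩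
      by_contra hab
      exact hkey a b haI hbI (rg_adj_inl_inl.mpr ⟨hab, Or.inr ⟨i, haP, hbP⟩⟩)
    have hIk : k ≤ I.ncard := by
      have hcompl := Set.ncard_add_ncard_compl I
      rw [Nat.card_eq_fintype_card] at hcompl
      have hle : (Iᶜ).ncard ≤ S.ncard := by
        rw [← Set.ncard_image_of_injective _ (Sum.inl_injective :
          Function.Injective (Sum.inl : V → V ⊕ Option (Fin m)))]
        refine Set.ncard_le_ncard ?_ (Set.toFinite _)
        rintro v ⟨a, ha, rfl⟩
        simpa [hI] using ha
      omega
    have hsum : I.ncard = ∑ i, (I ∩ P i).ncard := ncard_eq_sum_parts P hdisj hcover I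
    refine ⟨I, ?_, ?_⟩
    · intro a ha b hb hadj
      exact hkey a b ha hb (rg_adj_inl_inl.mpr ⟨hadj.ne, Or.inl hadj⟩)
    · intro i
      by_contra hne
      have hzero : (I ∩ P i).ncard = 0 := by
        have := hIone i; omega
      have hsum2 : ∑ j, (I ∩ P j).ncard =
          (I ∩ P i).ncard + ∑ j ∈ Finset.univ.erase i, (I ∩ P j).ncard :=
        (Finset.add_sum_erase _ _ (Finset.mem_univ i)).symm
      have herase : ∑ j ∈ Finset.univ.erase i, (I ∩ P j).ncard ≤ k - 1 := by
        calc ∑ j ∈ Finset.univ.erase i, (I ∩ P j).ncard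
            ≤ ∑ _j ∈ Finset.univ.erase i, 1 :=
              Finset.sum_le_sum (fun j _ => hIone j)
          _ = (Finset.univ.erase i).card := by simp
          _ = k - 1 := by simp [Finset.card_erase_of_mem]
      omega
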